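/- The series ∑_{k=2}^∞ (log k)(2k-1)/(k(k-1))^2 is at most 0.87. -/

import Mathlib

private lemma log_lt_of_pow {x : ℝ} (hx : 0 < x) (n m : ℕ) (hn : 0 < n)
    (h : x ^ n < (2.7182818283 : ℝ) ^ m) : Real.log x < (m : ℝ) / (n : ℝ) := by
  rw [lt_div_iff₀ (by exact_mod_cast hn)]
  have h2 : x ^ n < Real.exp 1 ^ m :=
    h.trans_le (pow_le_pow_left₀ (by norm_num) Real.exp_one_gt_d9.le m)
  have h3 := Real.log_lt_log (by positivity) h2
  rwa [Real.log_pow, Real.log_pow, Real.log_exp, mul_one, mul_comm] at h3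

/-- ∑_{k=2}^∞ (log k)(2k-1)/(k(k-1))^2 ≤ 0.87. -/
theorem sum_log_bound :
    Summable (fun k : ℕ => (Real.log ((k : ℝ) + 2) * (2 * ((k : ℝ) + 2) - 1)) /
      ((((k : ℝ) + 2) * (((k : ℝ) + 2) - 1)) ^ 2)) ∧
    (∑' k : ℕ, (Real.log ((k : ℝ) + 2) * (2 * ((k : ℝ) + 2) - 1)) /
      ((((k : ℝ) + 2) * (((k : ℝ) + 2) - 1)) ^ 2)) ≤ 0.87 := by
  set a : ℕ → ℝ := fun k : ℕ => (Real.log ((k : ℝ) + 2) * (2 * ((k : ℝ) + 2) - 1)) /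
      ((((k : ℝ) + 2) * (((k : ℝ) + 2) - 1)) ^ 2) with ha
  set g : ℕ → ℝ := fun n : ℕ => (2 * Real.log ((n : ℝ) + 2) + 1) / (2 * ((n : ℝ) + 1) ^ 2)
    with hg
  have hx2 : ∀ n : ℕ, (2 : ℝ) ≤ (n : ℝ) + 2 := fun n => by
    have : (0:ℝ) ≤ (n:ℝ) := Nat.cast_nonneg n; linarith
  have ha_nonneg : ∀ n, 0 ≤ a n := by
    intro n
    have h2 := hx2 n
    have hl : 0 ≤ Real.log ((n : ℝ) + 2) := Real.log_nonneg (by linarith)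
    apply div_nonneg (by nlinarith) (by positivity)
  have hg_nonneg : ∀ n, 0 ≤ g n := by
    intro n
    have hl : 0 ≤ Real.log ((n : ℝ) + 2) := Real.log_nonneg (by linarith [hx2 n])
    apply div_nonneg (by linarith) (by positivity)
  have key : ∀ n : ℕ, a n ≤ g n - g (n + 1) := by
    intro n
    have h2 := hx2 n
    set x : ℝ := (n : ℝ) + 2 with hxdef
    have hx0 : (0:ℝ) < x := by linarith
    have hx1 : (0:ℝ) < x - 1 := by linarith
    have hL : 0 ≤ Real.log x := Real.log_nonneg (by linarith)
    have hlog : Real.log (x + 1) ≤ Real.log x + 1 / x := by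
      have h := Real.log_le_sub_one_of_pos (x := (x + 1) / x) (by positivity)
      rw [Real.log_div (by positivity) (by positivity)] at h
      have hh : (x + 1) / x - 1 = 1 / x := by field_simp; ring
      rw [hh] at h; linarith
    have hgn1 : g (n + 1) = (2 * Real.log (x + 1) + 1) / (2 * x ^ 2) := by
      simp only [hg, hxdef]; push_cast; ring_nf
    have hgn : g n = (2 * Real.log x + 1) / (2 * (x - 1) ^ 2) := by
      simp only [hg, hxdef]; ring_nf
    show Real.log x * (2 * x - 1) / ((x * (x - 1)) ^ 2) ≤ g n - g (n + 1)
    rw [hgn, hgn1]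
    have hid : (2 * Real.log x + 1) / (2 * (x - 1) ^ 2)
        - (2 * (Real.log x + 1 / x) + 1) / (2 * x ^ 2)
        - Real.log x * (2 * x - 1) / ((x * (x - 1)) ^ 2)
        = (3 * x - 2) / (2 * x ^ 3 * (x - 1) ^ 2) := by
      field_simp
      ring
    have hfrac : 0 ≤ (3 * x - 2) / (2 * x ^ 3 * (x - 1) ^ 2) :=
      div_nonneg (by linarith) (by positivity)
    have hmono : (2 * Real.log (x + 1) + 1) / (2 * x ^ 2)
        ≤ (2 * (Real.log x + 1 / x) + 1) / (2 * x ^ 2) :=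
      (div_le_div_iff_of_pos_right (by positivity)).mpr (by linarith)
    linarith
  -- summability
  have hle : ∀ n : ℕ, a n ≤ 2 / ((n : ℝ) + 1) ^ 2 := by
    intro n
    have h2 := hx2 n
    set x : ℝ := (n : ℝ) + 2 with hxdef
    have hx1 : (0:ℝ) < x - 1 := by linarith
    have hL : Real.log x ≤ x - 1 := Real.log_le_sub_one_of_pos (by linarith)
    have hL0 : 0 ≤ Real.log x := Real.log_nonneg (by linarith)
    have hcast : ((n : ℝ) + 1) = x - 1 := by rw [hxdef]; ring
    show Real.log x * (2 * x - 1) / ((x * (x - 1)) ^ 2) ≤ 2 / ((n : ℝ) + 1) ^ 2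
    rw [hcast, div_le_div_iff₀ (by positivity) (by positivity)]
    nlinarith [sq_nonneg (x - 1), sq_nonneg x, mul_pos hx1 hx1]
  have hsummable : Summable a := by
    apply Summable.of_nonneg_of_le ha_nonneg hle
    have h1 : Summable (fun n : ℕ => 1 / ((n : ℝ) + 1) ^ 2) := by
      have := Real.summable_one_div_nat_pow.mpr (show 1 < 2 by norm_num)
      exact_mod_cast (summable_nat_add_iff 1).mpr this
    simpa [div_eq_mul_inv, mul_comm, mul_assoc] using h1.mul_left 2
  refine ⟨hsummable, ?_⟩
  -- bound the partial sums
  have hpartial : ∀ N : ℕ, ∑ i ∈ Finset.range N, a i ≤ 0.87 := by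
    intro N
    have hsub : ∑ i ∈ Finset.range N, a i ≤ ∑ i ∈ Finset.range (max N 9), a i :=
      Finset.sum_le_sum_of_subset_of_nonneg
        (Finset.range_subset_range.mpr (le_max_left _ _)) (fun i _ _ => ha_nonneg i)
    refine hsub.trans ?_
    obtain ⟨m, hm⟩ : ∃ m, max N 9 = 9 + m := ⟨max N 9 - 9, by omega⟩
    rw [hm, Finset.sum_range_add]
    have htail : ∑ i ∈ Finset.range m, a (9 + i) ≤ g 9 := by
      calc ∑ i ∈ Finset.range m, a (9 + i)
          ≤ ∑ i ∈ Finset.range m, (g (9 + i) - g (9 + i + 1)) :=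
            Finset.sum_le_sum (fun i _ => key (9 + i))
        _ = g 9 - g (9 + m) := by
            have := Finset.sum_range_sub' (fun i => g (9 + i)) m
            simpa [add_assoc] using this
        _ ≤ g 9 := by linarith [hg_nonneg (9 + m)]
    have hhead : ∑ i ∈ Finset.range 9, a i + g 9 ≤ 0.87 := by
      have l2 : Real.log 2 < 0.6931471808 := Real.log_two_lt_d9
      have l3 : Real.log 3 < (11 : ℝ) / 10 := by
        apply log_lt_of_pow (by norm_num) 10 11 (by norm_num); norm_num
      have l4 : Real.log 4 < (7 : ℝ) / 5 := by
        apply log_lt_of_pow (by norm_num) 5 7 (by norm_num); norm_num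
      have l5 : Real.log 5 < (13 : ℝ) / 8 := by
        apply log_lt_of_pow (by norm_num) 8 13 (by norm_num); norm_num
      have l6 : Real.log 6 < (9 : ℝ) / 5 := by
        apply log_lt_of_pow (by norm_num) 5 9 (by norm_num); norm_num
      have l7 : Real.log 7 < (14 : ℝ) / 7 := by
        apply log_lt_of_pow (by norm_num) 7 14 (by norm_num); norm_num
      have l8 : Real.log 8 < (21 : ℝ) / 10 := by
        apply log_lt_of_pow (by norm_num) 10 21 (by norm_num); norm_num
      have l9 : Real.log 9 < (11 : ℝ) / 5 := by
        apply log_lt_of_pow (by norm_num) 5 11 (by norm_num); norm_num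
      have l10 : Real.log 10 < (7 : ℝ) / 3 := by
        apply log_lt_of_pow (by norm_num) 3 7 (by norm_num); norm_num
      have l11 : Real.log 11 < (12 : ℝ) / 5 := by
        apply log_lt_of_pow (by norm_num) 5 12 (by norm_num); norm_num
      simp only [ha, hg, Finset.sum_range_succ, Finset.sum_range_zero]
      norm_num
      linarith
    linarith
  exact Real.tsum_le_of_sum_range_le ha_nonneg hpartial
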